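/- arXiv:2512.19587 — 4 statements merged into one kernel-verified Lean document; each statement's English description precedes it below -/
import Mathlib

section
/- If Φ: ℝ^m → ℝ^n is differentiable and its first fundamental form satisfies G(u) = (DΦ(u))ᵀ(DΦ(u)) = λ(u)²·I_m for a rational function λ, then for every PH curve r: ℝ → ℝ^m the composed curve Φ ∘ r satisfies ‖(Φ ∘ r)'(t)‖² = (λ(r(t))·σ(t))², i.e. Φ ∘ r is PH. -/
/-- If `Φ` is differentiable with first fundamental form `G(u) = λ(u)²·I_m`
(equivalently `‖DΦ(u)v‖² = λ(u)²‖v‖²` for all directions `v`), with `λ` a rational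
function, then the image of any PH curve `r` (with `‖r'(t)‖² = σ(t)²`, `σ` rational)
satisfies `‖(Φ∘r)'(t)‖² = (λ(r(t))·σ(t))²`, i.e. `Φ∘r` is PH. -/
theorem stmt_2 {m n : ℕ}
    (Φ : EuclideanSpace ℝ (Fin m) → EuclideanSpace ℝ (Fin n))
    (hΦ : Differentiable ℝ Φ)
    (lam : EuclideanSpace ℝ (Fin m) → ℝ)
    (hlam_rat : ∃ p q : MvPolynomial (Fin m) ℝ, q ≠ 0 ∧ ∀ u : EuclideanSpace ℝ (Fin m),
      lam u * MvPolynomial.eval (fun i => u i) q = MvPolynomial.eval (fun i => u i) p)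
    (hG : ∀ u v, ‖fderiv ℝ Φ u v‖ ^ 2 = lam u ^ 2 * ‖v‖ ^ 2)
    (r : ℝ → EuclideanSpace ℝ (Fin m)) (hr : Differentiable ℝ r)
    (σ : ℝ → ℝ)
    (hσ_rat : ∃ p q : Polynomial ℝ, q ≠ 0 ∧ ∀ t : ℝ, σ t * q.eval t = p.eval t)
    (hPH : ∀ t : ℝ, ‖deriv r t‖ ^ 2 = σ t ^ 2) :
    ∀ t : ℝ, ‖deriv (Φ ∘ r) t‖ ^ 2 = (lam (r t) * σ t) ^ 2 := by
  intro t
  have h1 : deriv (Φ ∘ r) t = fderiv ℝ Φ (r t) (deriv r t) := by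
    have := (hΦ (r t)).hasFDerivAt.comp_hasDerivAt t (hr t).hasDerivAt
    exact this.deriv
  rw [h1, hG, hPH, mul_pow]
end

section
/- Let f(x,y) ∈ ℝ[x,y] be a polynomial in two variables such that for every y₀ ∈ ℝ the one-variable polynomial x ↦ f(x, y₀) is a square in ℝ[x]. Then there exist g ∈ ℝ[y] and h ∈ ℝ[x,y] such that f(x,y) = g(y)·h(x,y)². -/
open Polynomial
open scoped nonZeroDivisors

namespace Stmt4Aux

noncomputable section

abbrev K' : Type := FractionRing (Polynomial ℝ)

abbrev φ : Polynomial ℝ →+* K' := algebraMap (Polynomial ℝ) K'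

lemma φ_inj : Function.Injective (φ : Polynomial ℝ →+* K') :=
  IsFractionRing.injective _ _

lemma smul_map (c : Polynomial ℝ) (a : Polynomial K') :
    c • a = C (φ c) * a := by
  rw [Algebra.smul_def, Polynomial.algebraMap_apply]

lemma bezout_spec (q m : Polynomial (Polynomial ℝ))
    (h : IsCoprime (q.map φ) (m.map φ)) :
    ∃ d : Polynomial ℝ, d ≠ 0 ∧ ∃ a b : Polynomial (Polynomial ℝ),
      a * q + b * m = C d := by
  obtain ⟨a, b, hab⟩ := h
  obtain ⟨da, hda⟩ := IsLocalization.integerNormalization_map_to_map (Polynomial ℝ)⁰ a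
  obtain ⟨db, hdb⟩ := IsLocalization.integerNormalization_map_to_map (Polynomial ℝ)⁰ b
  refine ⟨(db : Polynomial ℝ) * (da : Polynomial ℝ),
    mul_ne_zero (nonZeroDivisors.ne_zero db.2) (nonZeroDivisors.ne_zero da.2),
    C (db : Polynomial ℝ) * IsLocalization.integerNormalization (Polynomial ℝ)⁰ a,
    C (da : Polynomial ℝ) * IsLocalization.integerNormalization (Polynomial ℝ)⁰ b, ?_⟩
  apply Polynomial.map_injective φ φ_inj
  rw [smul_map] at hda hdb
  simp only [Polynomial.map_add, Polynomial.map_mul, Polynomial.map_C, hda, hdb, map_mul]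
  linear_combination (C (φ (db : Polynomial ℝ)) * C (φ (da : Polynomial ℝ))) * hab

lemma coprime_eval {q m : Polynomial (Polynomial ℝ)} {d : Polynomial ℝ}
    {a b : Polynomial (Polynomial ℝ)} (hab : a * q + b * m = C d)
    {y₀ : ℝ} (hd : d.eval y₀ ≠ 0) :
    IsCoprime (q.map (evalRingHom y₀)) (m.map (evalRingHom y₀)) := by
  refine ⟨C (d.eval y₀)⁻¹ * a.map (evalRingHom y₀),
    C (d.eval y₀)⁻¹ * b.map (evalRingHom y₀), ?_⟩
  have h := congrArg (Polynomial.map (evalRingHom y₀)) hab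
  simp only [Polynomial.map_add, Polynomial.map_mul, Polynomial.map_C, coe_evalRingHom] at h
  rw [mul_assoc, mul_assoc, ← mul_add, h, ← C_mul, inv_mul_cancel₀ hd, C_1]


lemma eventually_ne {d : Polynomial ℝ} (hd : d ≠ 0) :
    ∀ᶠ y₀ in Filter.cofinite, d.eval y₀ ≠ 0 := by
  rw [Filter.eventually_cofinite]
  simpa only [not_not, IsRoot.def] using d.finite_setOf_isRoot hd

lemma key (q m : Polynomial (Polynomial ℝ)) (hq1 : 1 ≤ q.natDegree)
    (hqK : Irreducible (q.map φ)) (hnd : ¬ q.map φ ∣ m.map φ)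
    (hsq : ∀ᶠ y₀ in Filter.cofinite,
      ∃ p : Polynomial ℝ, (q * m).map (evalRingHom y₀) = p ^ 2) : False := by
  classical
  have hq0 : q ≠ 0 := fun h => by simp [h] at hq1
  have hcop : IsCoprime (q.map φ) (m.map φ) := (hqK.coprime_iff_not_dvd).mpr hnd
  have hsep : (q.map φ).Separable := hqK.separable
  have hcop' : IsCoprime (q.map φ) ((derivative q).map φ) := by
    rw [separable_def, derivative_map] at hsep; exact hsep
  obtain ⟨d₁, hd₁, a₁, b₁, hab₁⟩ := bezout_spec q m hcop
  obtain ⟨d₂, hd₂, a₂, b₂, hab₂⟩ := bezout_spec q (derivative q) hcop'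
  have hlq : q.leadingCoeff ≠ 0 := leadingCoeff_ne_zero.mpr hq0
  obtain ⟨y₀, ⟨p, hp⟩, he1, he2, he3⟩ :=
    (hsq.and ((eventually_ne hd₁).and ((eventually_ne hd₂).and (eventually_ne hlq)))).exists
  have hq₀deg : (q.map (evalRingHom y₀)).natDegree = q.natDegree :=
    natDegree_map_of_leadingCoeff_ne_zero _ he3
  have hq₀0 : q.map (evalRingHom y₀) ≠ 0 := by
    intro h; rw [h, natDegree_zero] at hq₀deg; omega
  have hcop₀ : IsCoprime (q.map (evalRingHom y₀)) (m.map (evalRingHom y₀)) :=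
    coprime_eval hab₁ he1
  have hsep₀ : (q.map (evalRingHom y₀)).Separable := by
    rw [separable_def, derivative_map]
    exact coprime_eval hab₂ he2
  have hm₀ : m.map (evalRingHom y₀) ≠ 0 := by
    intro h; rw [h] at hcop₀
    exact not_isUnit_of_natDegree_pos _ (by omega) (isCoprime_zero_right.mp hcop₀)
  -- pass to ℂ
  have hρ : Function.Injective (algebraMap ℝ ℂ) := (algebraMap ℝ ℂ).injective
  have hQ0 : (q.map (evalRingHom y₀)).map (algebraMap ℝ ℂ) ≠ 0 :=
    (Polynomial.map_ne_zero_iff hρ).mpr hq₀0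
  have hM0 : (m.map (evalRingHom y₀)).map (algebraMap ℝ ℂ) ≠ 0 :=
    (Polynomial.map_ne_zero_iff hρ).mpr hm₀
  have hQdeg : ((q.map (evalRingHom y₀)).map (algebraMap ℝ ℂ)).natDegree = q.natDegree := by
    rw [natDegree_map_eq_of_injective hρ, hq₀deg]
  have hdegne : ((q.map (evalRingHom y₀)).map (algebraMap ℝ ℂ)).degree ≠ 0 :=
    (natDegree_pos_iff_degree_pos.mp (by omega)).ne'
  obtain ⟨α, hα⟩ := IsAlgClosed.exists_root
    ((q.map (evalRingHom y₀)).map (algebraMap ℝ ℂ)) hdegne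
  have h1 : rootMultiplicity α ((q.map (evalRingHom y₀)).map (algebraMap ℝ ℂ)) = 1 :=
    le_antisymm (rootMultiplicity_le_one_of_separable (hsep₀.map) α)
      ((rootMultiplicity_pos hQ0).mpr hα)
  have hMα : ¬ ((m.map (evalRingHom y₀)).map (algebraMap ℝ ℂ)).IsRoot α := by
    obtain ⟨u, v, huv⟩ := hcop₀.map (mapRingHom (algebraMap ℝ ℂ))
    intro hroot
    have h2 := congrArg (eval α) huv
    simp only [coe_mapRingHom, eval_add, eval_mul, eval_one, hα.eq_zero, hroot.eq_zero,
      mul_zero, add_zero, zero_add] at h2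
    exact one_ne_zero h2.symm
  have hfmap : q.map (evalRingHom y₀) * m.map (evalRingHom y₀) = p ^ 2 := by
    rw [← Polynomial.map_mul]; exact hp
  have hcm := congrArg (Polynomial.map (algebraMap ℝ ℂ)) hfmap
  rw [Polynomial.map_mul, Polynomial.map_pow] at hcm
  have hp0 : p.map (algebraMap ℝ ℂ) ≠ 0 := by
    intro h; rw [h] at hcm
    exact (mul_ne_zero hQ0 hM0) (by simpa using hcm)
  have hmul : rootMultiplicity α
      ((q.map (evalRingHom y₀)).map (algebraMap ℝ ℂ) *
       (m.map (evalRingHom y₀)).map (algebraMap ℝ ℂ)) = 1 := by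
    rw [rootMultiplicity_mul (mul_ne_zero hQ0 hM0), h1, rootMultiplicity_eq_zero hMα]
  rw [hcm, pow_two, rootMultiplicity_mul (mul_ne_zero hp0 hp0)] at hmul
  omega

lemma main_aux : ∀ n : ℕ, ∀ f : Polynomial (Polynomial ℝ), f.natDegree ≤ n →
    (∀ᶠ y₀ in Filter.cofinite, ∃ p : Polynomial ℝ, f.map (evalRingHom y₀) = p ^ 2) →
    ∃ (g : Polynomial ℝ) (h' : Polynomial (Polynomial ℝ)), f = C g * h' ^ 2 := by
  intro n
  induction n using Nat.strong_induction_on with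
  | _ n ih =>
  intro f hdeg hsq
  by_cases h0 : f.natDegree = 0
  · exact ⟨f.coeff 0, 1, by rw [one_pow, mul_one]; exact eq_C_of_natDegree_eq_zero h0⟩
  have hf0 : f ≠ 0 := fun h => h0 (by simp [h])
  have hfK0 : f.map φ ≠ 0 := (Polynomial.map_ne_zero_iff φ_inj).mpr hf0
  have hfKdeg : (f.map φ).natDegree = f.natDegree := natDegree_map_eq_of_injective φ_inj f
  have hnotunit : ¬ IsUnit (f.map φ) := not_isUnit_of_natDegree_pos _ (by omega)
  obtain ⟨qk, hqk_irr, hqk_dvd⟩ := WfDvdMonoid.exists_irreducible_factor hnotunit hfK0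
  obtain ⟨c, hc⟩ := IsLocalization.integerNormalization_map_to_map (Polynomial ℝ)⁰ qk
  set q₁ := IsLocalization.integerNormalization (Polynomial ℝ)⁰ qk with hq₁def
  set q := q₁.primPart with hqdef
  have hqk0 : qk ≠ 0 := hqk_irr.ne_zero
  have hc0 : φ (c : Polynomial ℝ) ≠ 0 := fun h =>
    nonZeroDivisors.ne_zero c.2 (φ_inj (by simpa using h))
  have hmapq₁ : q₁.map φ = C (φ (c : Polynomial ℝ)) * qk := by rw [hc, smul_map]
  have hq₁0 : q₁ ≠ 0 := by
    intro h
    rw [h, Polynomial.map_zero] at hmapq₁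
    exact (mul_ne_zero (C_ne_zero.mpr hc0) hqk0) hmapq₁.symm
  have hcont0 : φ q₁.content ≠ 0 := fun h =>
    hq₁0 (content_eq_zero_iff.mp (φ_inj (by simpa using h)))
  have hmapq : q₁.map φ = C (φ q₁.content) * q.map φ := by
    conv_lhs => rw [q₁.eq_C_content_mul_primPart]
    rw [Polynomial.map_mul, Polynomial.map_C]
  have hqqk : q.map φ = C ((φ q₁.content)⁻¹ * φ (c : Polynomial ℝ)) * qk := by
    have h5 : C (φ q₁.content) * q.map φ = C (φ (c : Polynomial ℝ)) * qk :=
      hmapq.symm.trans hmapq₁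
    calc q.map φ = C (φ q₁.content)⁻¹ * (C (φ q₁.content) * q.map φ) := by
          rw [← mul_assoc, ← C_mul, inv_mul_cancel₀ hcont0, C_1, one_mul]
      _ = C ((φ q₁.content)⁻¹ * φ (c : Polynomial ℝ)) * qk := by
          rw [h5, ← mul_assoc, ← C_mul]
  have hassoc : Associated qk (q.map φ) := by
    have hu : IsUnit (C ((φ q₁.content)⁻¹ * φ (c : Polynomial ℝ))) :=
      isUnit_C.mpr (isUnit_iff_ne_zero.mpr (mul_ne_zero (inv_ne_zero hcont0) hc0))
    exact ⟨hu.unit, by rw [IsUnit.unit_spec, mul_comm, ← hqqk]⟩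
  have hq_irr : Irreducible (q.map φ) := hassoc.irreducible hqk_irr
  have hq_dvd_K : q.map φ ∣ f.map φ := hassoc.dvd_iff_dvd_left.mp hqk_dvd
  have hqprim : q.IsPrimitive := q₁.isPrimitive_primPart
  have hdvd_of_mapdvd : ∀ w : Polynomial (Polynomial ℝ), w ≠ 0 →
      q.map φ ∣ w.map φ → q ∣ w := by
    intro w hw hdvd
    have hwc : φ w.content ≠ 0 := fun h =>
      hw (content_eq_zero_iff.mp (φ_inj (by simpa using h)))
    have hmapw : w.map φ = C (φ w.content) * w.primPart.map φ := by
      conv_lhs => rw [w.eq_C_content_mul_primPart]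
      rw [Polynomial.map_mul, Polynomial.map_C]
    have h2 : q.map φ ∣ w.primPart.map φ := by
      have h3 : q.map φ ∣ C (φ w.content)⁻¹ * (C (φ w.content) * w.primPart.map φ) :=
        Dvd.dvd.mul_left (hmapw ▸ hdvd) _
      rwa [← mul_assoc, ← C_mul, inv_mul_cancel₀ hwc, C_1, one_mul] at h3
    exact (hqprim.dvd_of_fraction_map_dvd_fraction_map (q := w.primPart) h2).trans
      w.primPart_dvd
  obtain ⟨m, hm⟩ : q ∣ f := hdvd_of_mapdvd f hf0 hq_dvd_K
  have hqKdeg : (q.map φ).natDegree = q.natDegree := natDegree_map_eq_of_injective φ_inj q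
  have hqdeg1 : 1 ≤ q.natDegree := by
    by_contra hlt
    have h6 : (q.map φ).natDegree = 0 := by omega
    obtain ⟨x, hx⟩ := natDegree_eq_zero.mp h6
    have hx0 : x ≠ 0 := fun h => hq_irr.ne_zero (by rw [← hx, h, C_0])
    exact hq_irr.not_isUnit (hx ▸ isUnit_C.mpr (isUnit_iff_ne_zero.mpr hx0))
  have hq0 : q ≠ 0 := fun h => by simp [h] at hqdeg1
  have hm0 : m ≠ 0 := fun h => hf0 (by rw [hm, h, mul_zero])
  by_cases hdvd2 : q ∣ m
  · obtain ⟨f₂, hf₂⟩ := hdvd2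
    have hff : f = q ^ 2 * f₂ := by rw [hm, hf₂]; ring
    have hf₂0 : f₂ ≠ 0 := fun h => hf0 (by rw [hff, h, mul_zero])
    have hdegs : f.natDegree = 2 * q.natDegree + f₂.natDegree := by
      rw [hff, natDegree_mul (pow_ne_zero 2 hq0) hf₂0, natDegree_pow]
    have hlq : q.leadingCoeff ≠ 0 := leadingCoeff_ne_zero.mpr hq0
    have hsq₂ : ∀ᶠ y₀ in Filter.cofinite,
        ∃ r : Polynomial ℝ, f₂.map (evalRingHom y₀) = r ^ 2 := by
      filter_upwards [hsq, eventually_ne hlq] with y₀ hpy hq₀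
      obtain ⟨p, hp⟩ := hpy
      have hq₀0 : q.map (evalRingHom y₀) ≠ 0 := by
        intro h
        apply hq₀
        have h7 : (q.map (evalRingHom y₀)).coeff q.natDegree
            = evalRingHom y₀ (q.coeff q.natDegree) := coeff_map _ _
        rw [h, coeff_zero] at h7
        exact h7.symm
      have hps : (q.map (evalRingHom y₀)) ^ 2 * f₂.map (evalRingHom y₀) = p ^ 2 := by
        rw [← hp, hff, Polynomial.map_mul, Polynomial.map_pow]
      have hdvd : (q.map (evalRingHom y₀)) ^ 2 ∣ p ^ 2 := ⟨_, hps.symm⟩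
      obtain ⟨r, hr⟩ := (IsIntegrallyClosed.pow_dvd_pow_iff two_ne_zero).mp hdvd
      refine ⟨r, mul_left_cancel₀ (pow_ne_zero 2 hq₀0) ?_⟩
      rw [hps, hr]; ring
    have hstep : f₂.natDegree < n := by omega
    obtain ⟨g, h₂, hg⟩ := ih f₂.natDegree hstep f₂ le_rfl hsq₂
    exact ⟨g, q * h₂, by rw [hff, hg]; ring⟩
  · exfalso
    refine key q m hqdeg1 hq_irr ?_ ?_
    · intro hK
      exact hdvd2 (hdvd_of_mapdvd m hm0 hK)
    · rw [← hm]; exact hsq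

end
end Stmt4Aux

/-- If `f ∈ ℝ[x,y]` (viewed as a polynomial in `x` with coefficients in `ℝ[y]`)
specializes to a square in `ℝ[x]` for every `y₀ ∈ ℝ`, then `f = g(y)·h(x,y)²`
for some `g ∈ ℝ[y]` and `h ∈ ℝ[x,y]`. -/
theorem stmt_4 (f : Polynomial (Polynomial ℝ))
    (h : ∀ y₀ : ℝ, ∃ p : Polynomial ℝ, f.map (Polynomial.evalRingHom y₀) = p ^ 2) :
    ∃ (g : Polynomial ℝ) (h' : Polynomial (Polynomial ℝ)),
      f = Polynomial.C g * h' ^ 2 := by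
  exact Stmt4Aux.main_aux f.natDegree f le_rfl (Filter.Eventually.of_forall h)
end

section
/- Let S = [[a, b], [b, c]] be a symmetric positive definite 2×2 real matrix, and let r(t) = (t² − 1, t(t² − 1)/√3) be the Tschirnhausen cubic. If the quartic polynomial P(t) = r'(t)ᵀ S r'(t) is the square of a polynomial in ℝ[t], then b = 0 and a = c, i.e. S is a positive scalar multiple of the identity. -/
open Polynomial

/-- If `S = [[a,b],[b,c]]` is symmetric positive definite and the quartic
`P(t) = r'(t)ᵀ S r'(t)` built from the Tschirnhausen cubic derivative
`r'(t) = (2t, (3t²−1)/√3)` is the square of a polynomial, then `b = 0` and `a = c`. -/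
theorem stmt_6 (a b c : ℝ) (ha : 0 < a) (hc : 0 < c) (hdet : 0 < a * c - b ^ 2)
    (hsq : ∃ q : Polynomial ℝ, ∀ t : ℝ,
      a * (2 * t) ^ 2 + 2 * b * (2 * t) * ((3 * t ^ 2 - 1) / Real.sqrt 3)
        + c * ((3 * t ^ 2 - 1) / Real.sqrt 3) ^ 2 = (q.eval t) ^ 2) :
    b = 0 ∧ a = c := by
  obtain ⟨q, hq⟩ := hsq
  set s : ℝ := Real.sqrt 3 with hsdef
  have hs : s ^ 2 = 3 := Real.sq_sqrt (by norm_num)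
  have hs0 : s ≠ 0 := by positivity
  set p : Polynomial ℝ := C (3*c) * X^4 + C (4*s*b) * X^3 + C (4*a-2*c) * X^2
      + C (-(4*s*b/3)) * X + C (c/3) with hpdef
  have hdiv : ∀ t : ℝ, (3 * t ^ 2 - 1) / s = (3 * t ^ 2 - 1) * s / 3 := by
    intro t
    field_simp
    linear_combination (1 - 3 * t ^ 2) * hs
  have hpq : p = q ^ 2 := by
    apply Polynomial.funext
    intro t
    rw [Polynomial.eval_pow, ← hq t, hdiv t]
    simp only [hpdef, eval_add, eval_mul, eval_pow, eval_C, eval_X]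
    linear_combination (-(c * (3 * t ^ 2 - 1) ^ 2) / 9) * hs
  have hc3 : (3*c : ℝ) ≠ 0 := by positivity
  have hpdeg : p.natDegree = 4 := by
    rw [hpdef]
    compute_degree!
    positivity
  have hqdeg : q.natDegree = 2 := by
    have h2 : (q^2).natDegree = 4 := by rw [← hpq]; exact hpdeg
    rw [Polynomial.natDegree_pow] at h2
    omega
  have hq3 : q.coeff 3 = 0 := q.coeff_eq_zero_of_natDegree_lt (by omega)
  have hq4 : q.coeff 4 = 0 := q.coeff_eq_zero_of_natDegree_lt (by omega)
  set q0 := q.coeff 0 with hq0d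
  set q1 := q.coeff 1 with hq1d
  set q2 := q.coeff 2 with hq2d
  have hco : ∀ n, p.coeff n = (q^2).coeff n := fun n => by rw [hpq]
  have key : ∀ n, (q^2).coeff n = ∑ k ∈ Finset.range (n+1), q.coeff k * q.coeff (n - k) := by
    intro n
    rw [sq, Polynomial.coeff_mul, Finset.Nat.sum_antidiagonal_eq_sum_range_succ_mk]
  have e4 : 3*c = q2 * q2 := by
    have h := hco 4
    rw [key] at h
    simp only [hpdef, coeff_add, coeff_C_mul, coeff_X_pow, coeff_X, coeff_C,
      Finset.sum_range_succ, Finset.sum_range_zero, hq3, hq4, ← hq0d, ← hq1d, ← hq2d] at h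
    norm_num at h
    linarith [h]
  have e3 : 4*s*b = 2 * (q1 * q2) := by
    have h := hco 3
    rw [key] at h
    simp only [hpdef, coeff_add, coeff_C_mul, coeff_X_pow, coeff_X, coeff_C,
      Finset.sum_range_succ, Finset.sum_range_zero, hq3, ← hq0d, ← hq1d, ← hq2d] at h
    norm_num at h
    linarith [h]
  have e2 : 4*a - 2*c = q1 * q1 + 2 * (q0 * q2) := by
    have h := hco 2
    rw [key] at h
    simp only [hpdef, coeff_add, coeff_C_mul, coeff_X_pow, coeff_X, coeff_C,
      Finset.sum_range_succ, Finset.sum_range_zero, ← hq0d, ← hq1d, ← hq2d] at h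
    norm_num at h
    linarith [h]
  have e1 : -(4*s*b/3) = 2 * (q0 * q1) := by
    have h := hco 1
    rw [key] at h
    simp only [hpdef, coeff_add, coeff_C_mul, coeff_X_pow, coeff_X, coeff_C,
      Finset.sum_range_succ, Finset.sum_range_zero, ← hq0d, ← hq1d, ← hq2d] at h
    norm_num at h
    linarith [h]
  have e0 : c/3 = q0 * q0 := by
    have h := hco 0
    rw [key] at h
    simp only [hpdef, coeff_add, coeff_C_mul, coeff_X_pow, coeff_X, coeff_C,
      Finset.sum_range_succ, Finset.sum_range_zero, ← hq0d, ← hq1d, ← hq2d] at h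
    norm_num at h
    linarith [h]
  by_cases hq1 : q1 = 0
  · have hb : b = 0 := by
      have h : 4*s*b = 0 := by rw [e3, hq1]; ring
      have h4s : (4:ℝ)*s ≠ 0 := by positivity
      rcases mul_eq_zero.mp (by linarith [h] : (4*s)*b = 0) with h' | h'
      · exact absurd h' h4s
      · exact h'
    refine ⟨hb, ?_⟩
    have hfac : (q0*q2 - c) * (q0*q2 + c) = 0 := by
      linear_combination (-(q2*q2)) * e0 - (c/3) * e4
    rcases mul_eq_zero.mp hfac with h' | h'
    · -- q0*q2 = c
      have : q0*q2 = c := by linarith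
      nlinarith [e2, hq1, this]
    · -- q0*q2 = -c, gives a = 0, contradiction
      have h'' : q0*q2 = -c := by linarith
      exfalso
      nlinarith [e2, hq1, h'']
  · exfalso
    by_cases hb : b = 0
    · have h1 : q1 * q2 = 0 := by linear_combination (-1/2)*e3 + 2*s*hb
      have h2 : q2 = 0 := by
        rcases mul_eq_zero.mp h1 with h|h
        · exact absurd h hq1
        · exact h
      rw [h2] at e4
      norm_num at e4
      linarith
    · have h4 : (4*s*b) * (q0 + q2/3) = 0 := by
        linear_combination q0 * e3 - q2 * e1
      have hsb : (4:ℝ)*s*b ≠ 0 := by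
        intro h
        rcases mul_eq_zero.mp h with h'|h'
        · rcases mul_eq_zero.mp h' with h''|h''
          · norm_num at h''
          · exact hs0 h''
        · exact hb h'
      have hrel : q2 = -3 * q0 := by
        have := (mul_eq_zero.mp h4).resolve_left hsb
        linarith
      have hq12 : q1 * q1 = 4*a := by
        linear_combination -e2 - 2*q0*hrel - 6*e0
      have hA : 16*(s^2*(b^2)) = 4*((q1*q1)*(q2*q2)) := by
        linear_combination (4*s*b + 2*(q1*q2)) * e3
      rw [hs, hq12, ← e4] at hA
      nlinarith [hA, hdet]
end

section
/- Suppose real numbers a, b, c, α, β, γ satisfy α² = 3c, 2αβ = 4√3·b, 2αγ + β² = 4a − 2c, 2βγ = −(4√3/3)·b, γ² = c/3, and suppose the matrix [[a,b],[b,c]] is positive definite (a > 0, c > 0, ac − b² > 0). Then b = 0 and a = c. -/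
/-- The coefficient system arising from `P(t) = (αt² + βt + γ)²` for the
Tschirnhausen quartic, together with positive definiteness of `[[a,b],[b,c]]`,
forces `b = 0` and `a = c`. -/
theorem stmt_7 (a b c α β γ : ℝ)
    (h1 : α ^ 2 = 3 * c)
    (h2 : 2 * α * β = 4 * Real.sqrt 3 * b)
    (h3 : 2 * α * γ + β ^ 2 = 4 * a - 2 * c)
    (h4 : 2 * β * γ = -(4 * Real.sqrt 3 / 3) * b)
    (h5 : γ ^ 2 = c / 3)
    (ha : 0 < a) (hc : 0 < c) (hdet : 0 < a * c - b ^ 2) :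
    b = 0 ∧ a = c := by
  have hs : Real.sqrt 3 ^ 2 = 3 := Real.sq_sqrt (by norm_num)
  have hprod : α * γ * β ^ 2 = -4 * b ^ 2 := by
    have h24 : (2 * α * β) * (2 * β * γ)
        = (4 * Real.sqrt 3 * b) * (-(4 * Real.sqrt 3 / 3) * b) := by rw [h2, h4]
    nlinarith [h24, hs]
  have hp2 : (α * γ - c) * (α * γ + c) = 0 := by nlinarith [h1, h5]
  rcases mul_eq_zero.mp hp2 with hp | hp
  · -- αγ = c
    have hpc : α * γ = c := by linarith
    have hb : b = 0 := by nlinarith [sq_nonneg β, sq_nonneg b]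
    refine ⟨hb, ?_⟩
    have hβ : β ^ 2 = 0 := by nlinarith [hb]
    nlinarith [h3, hpc, hβ]
  · -- αγ = -c, contradiction
    have hpc : α * γ = -c := by linarith
    exfalso
    have hβ : c * β ^ 2 = 4 * b ^ 2 := by nlinarith
    nlinarith [h3, hβ, hpc, sq_nonneg β]
end
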